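/- Let q ≥ 3 and let a, b be integers with 0 < a, b < q−1 and a + b ≤ q−1; set c = a + b. Let y ∈ Σ_q^{n−1} and let 1 ≤ i < j ≤ n−1 be positions with y_i = y_j = c. Let x′ ∈ Σ_q^n be obtained from y by replacing the symbol y_i with the two symbols αβ, where (α,β) is (a,b) or (b,a), and let x″ ∈ Σ_q^n be obtained from y by replacing the symbol y_j with the two symbols γδ, where (γ,δ) is (a,b) or (b,a). Then 0 < Syn(x′) − Syn(x″) < qn; in particular Syn(x′) ≢ Syn(x″) (mod qn). -/
import Mathlib


/-- The VT syndrome `Syn(z) = Σ_{i=1}^{|z|} i·z_i` (positions are 1-indexed,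
so index `i` of the list gets weight `i+1`). -/
def syn (z : List ℕ) : ℕ := ∑ i ∈ Finset.range z.length, (i + 1) * z.getD i 0

lemma sum_getD (l : List ℕ) : ∑ k ∈ Finset.range l.length, l.getD k 0 = l.sum := by
  induction l with
  | nil => simp
  | cons x l ih =>
    rw [List.length_cons, Finset.sum_range_succ']
    simp only [List.getD_cons_succ, List.getD_cons_zero, List.sum_cons]
    rw [ih]; omega

lemma syn_cons (x : ℕ) (l : List ℕ) : syn (x :: l) = x + l.sum + syn l := by
  unfold syn
  rw [List.length_cons, Finset.sum_range_succ']
  simp only [List.getD_cons_succ, List.getD_cons_zero]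
  have : ∀ k ∈ Finset.range l.length, (k + 1 + 1) * l.getD k 0
      = l.getD k 0 + (k + 1) * l.getD k 0 := by intros; ring
  rw [Finset.sum_congr rfl this, Finset.sum_add_distrib, sum_getD]
  ring

lemma syn_append (u v : List ℕ) : syn (u ++ v) = syn u + u.length * v.sum + syn v := by
  induction u with
  | nil => simp [syn]
  | cons x u ih =>
    rw [List.cons_append, syn_cons, ih, syn_cons, List.sum_append, List.length_cons]
    ring

lemma syn_insert (y : List ℕ) (i α β : ℕ) (hi : i < y.length)
    (hc : y.getD i 0 = α + β) :
    syn (y.take i ++ α :: β :: y.drop (i+1)) = syn y + β + (y.drop (i+1)).sum := by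
  have hy : y = y.take i ++ (α + β) :: y.drop (i+1) := by
    rw [← hc, List.getD_eq_getElem y 0 hi, List.getElem_cons_drop]
    exact (List.take_append_drop i y).symm
  have hlen : (y.take i).length = i := by
    rw [List.length_take, Nat.min_eq_left hi.le]
  have h2 : syn y = syn (y.take i) + i * ((α+β) + (y.drop (i+1)).sum)
      + ((α+β) + (y.drop (i+1)).sum + syn (y.drop (i+1))) := by
    conv_lhs => rw [hy]
    rw [syn_append, syn_cons, hlen, List.sum_cons]
  rw [syn_append, syn_cons, syn_cons, hlen, h2]
  simp only [List.sum_cons]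
  ring

lemma sum_drop (y : List ℕ) (m : ℕ) :
    (y.drop m).sum = ∑ k ∈ Finset.Ico m y.length, y.getD k 0 := by
  rw [← sum_getD, List.length_drop, Finset.sum_Ico_eq_sum_range]
  apply Finset.sum_congr rfl
  intro k hk
  simp [List.getD_eq_getElem?_getD, List.getElem?_drop]

/-- Lemma 1: let `q ≥ 3`, `0 < a, b < q-1` with `a + b ≤ q-1`, `c = a+b`.
Let `y ∈ Σ_q^{n-1}` have `y` equal to `c` at two (0-indexed) positions `i < j ≤ n-2`.
If `x'` is obtained from `y` by replacing the `c` at position `i` with `αβ ∈ {ab, ba}`,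
and `x''` is obtained by replacing the `c` at position `j` with `γδ ∈ {ab, ba}`,
then `0 < Syn(x') - Syn(x'') < qn`; in particular `Syn(x') ≢ Syn(x'') (mod qn)`. -/
theorem stmt4 (q n : ℕ) (hq : 3 ≤ q) (a b : ℕ)
    (ha0 : 0 < a) (ha : a < q - 1) (hb0 : 0 < b) (hb : b < q - 1)
    (hab : a + b ≤ q - 1)
    (y : List ℕ) (hylen : y.length = n - 1) (hyq : ∀ e ∈ y, e < q)
    (i j : ℕ) (hij : i < j) (hj : j < n - 1)
    (hyi : y.getD i 0 = a + b) (hyj : y.getD j 0 = a + b)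
    (α β γ δ : ℕ)
    (hαβ : (α = a ∧ β = b) ∨ (α = b ∧ β = a))
    (hγδ : (γ = a ∧ δ = b) ∨ (γ = b ∧ δ = a))
    (x' x'' : List ℕ)
    (hx' : x' = y.take i ++ α :: β :: y.drop (i + 1))
    (hx'' : x'' = y.take j ++ γ :: δ :: y.drop (j + 1)) :
    0 < (syn x' : ℤ) - (syn x'' : ℤ) ∧ (syn x' : ℤ) - (syn x'' : ℤ) < q * n ∧
      ¬ (syn x' ≡ syn x'' [MOD q * n]) := by
  have hn3 : 3 ≤ n := by omega
  have hjL : j < y.length := by omega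
  have hiL : i < y.length := by omega
  have hs1 : α + β = a + b := by rcases hαβ with ⟨h1, h2⟩ | ⟨h1, h2⟩ <;> omega
  have hs2 : γ + δ = a + b := by rcases hγδ with ⟨h1, h2⟩ | ⟨h1, h2⟩ <;> omega
  have hβq : β < q - 1 := by rcases hαβ with ⟨h1, h2⟩ | ⟨h1, h2⟩ <;> omega
  have hδab : δ < a + b := by rcases hγδ with ⟨h1, h2⟩ | ⟨h1, h2⟩ <;> omega
  subst hx' hx''
  rw [syn_insert y i α β hiL (hyi.trans hs1.symm),
      syn_insert y j γ δ hjL (hyj.trans hs2.symm), sum_drop, sum_drop]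
  set T : ℕ := ∑ k ∈ Finset.Ico (i+1) (j+1), y.getD k 0 with hT
  have hsplit : (∑ k ∈ Finset.Ico (i+1) y.length, y.getD k 0)
      = T + ∑ k ∈ Finset.Ico (j+1) y.length, y.getD k 0 := by
    rw [hT, Finset.sum_Ico_consecutive (fun k => y.getD k 0) (by omega) (by omega)]
  have hT1 : a + b ≤ T := by
    rw [← hyj, hT]
    exact Finset.single_le_sum (f := fun k => y.getD k 0)
      (fun k _ => Nat.zero_le _) (Finset.mem_Ico.mpr ⟨by omega, by omega⟩)
  have hT2 : T ≤ (j - i) * (q - 1) := by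
    have := Finset.sum_le_card_nsmul (Finset.Ico (i+1) (j+1))
      (fun k => y.getD k 0) (q - 1) (by
        intro k hk
        rw [Finset.mem_Ico] at hk
        have hk' : k < y.length := by omega
        show y.getD k 0 ≤ q - 1
        rw [List.getD_eq_getElem y 0 hk']
        have := hyq _ (List.getElem_mem hk')
        omega)
    rw [hT]
    refine le_trans this ?_
    rw [smul_eq_mul, Nat.card_Ico]
    have : j + 1 - (i + 1) = j - i := by omega
    rw [this]
  have hub : β + T < q * n := by
    have h1 : T ≤ (n - 2) * (q - 1) := le_trans hT2 (Nat.mul_le_mul_right _ (by omega))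
    obtain ⟨q', rfl⟩ : ∃ q', q = q' + 3 := ⟨q - 3, by omega⟩
    obtain ⟨n', rfl⟩ : ∃ n', n = n' + 3 := ⟨n - 3, by omega⟩
    have h2 : (n' + 3 - 2) * (q' + 3 - 1) = (n' + 1) * (q' + 2) := by
      have e1 : n' + 3 - 2 = n' + 1 := by omega
      have e2 : q' + 3 - 1 = q' + 2 := by omega
      rw [e1, e2]
    rw [h2] at h1
    have e : (q' + 3) * (n' + 3) = (n' + 1) * (q' + 2) + (2 * q' + n' + 7) := by ring
    have hβ' : β ≤ q' + 1 := by omega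
    calc β + T ≤ (q' + 1) + (n' + 1) * (q' + 2) := by
          have := h1; omega
      _ < (q' + 3) * (n' + 3) := by linarith [e]
  rw [hsplit]
  have key1 : (0 : ℤ) < ((syn y + β + (T + ∑ k ∈ Finset.Ico (j+1) y.length, y.getD k 0) : ℕ) : ℤ)
      - ((syn y + δ + ∑ k ∈ Finset.Ico (j+1) y.length, y.getD k 0 : ℕ) : ℤ) := by
    push_cast; omega
  have key2 : ((syn y + β + (T + ∑ k ∈ Finset.Ico (j+1) y.length, y.getD k 0) : ℕ) : ℤ)
      - ((syn y + δ + ∑ k ∈ Finset.Ico (j+1) y.length, y.getD k 0 : ℕ) : ℤ) < q * n := by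
    push_cast; omega
  refine ⟨key1, key2, ?_⟩
  intro h
  have hd := (Nat.modEq_iff_dvd).mp h
  rw [show ((syn y + δ + ∑ k ∈ Finset.Ico (j+1) y.length, y.getD k 0 : ℕ) : ℤ)
      - ((syn y + β + (T + ∑ k ∈ Finset.Ico (j+1) y.length, y.getD k 0) : ℕ) : ℤ)
      = -(((syn y + β + (T + ∑ k ∈ Finset.Ico (j+1) y.length, y.getD k 0) : ℕ) : ℤ)
      - ((syn y + δ + ∑ k ∈ Finset.Ico (j+1) y.length, y.getD k 0 : ℕ) : ℤ)) from by ring] at hd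
  rw [dvd_neg] at hd
  have := Int.le_of_dvd key1 hd
  have hqn : ((q * n : ℕ) : ℤ) = (q : ℤ) * n := by push_cast; ring
  rw [hqn] at this
  linarith [key2]
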